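/- Let E be a complete Hausdorff locally convex space and H a Hilbert space. Then for each nonzero u in the completed projective tensor product E ⊗̂ H there exist continuous linear functionals f on E and g on H such that (f ⊗ g)(u) ≠ 0. (Banach-space version: if E is a Banach space and H a Hilbert space, the natural map E ⊗̂ H → B(E*, H**)-type bilinear-form space is injective; equivalently, continuous functionals of the form f ⊗ g separate points of E ⊗̂ H.) -/

import Mathlib

/-- Let `E` be a Banach space and `H` a Hilbert space, and let `T` realize the completed
projective tensor product `E ⊗̂ H`: a Banach space with a continuous bilinear map `tmul`
of norm `≤ 1` with dense span of elementary tensors, satisfying the universal property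
that every continuous bilinear form on `E × H` extends (without increase of norm) to a
continuous linear functional on `T`. Then for every nonzero `u ∈ T` there exist
continuous linear functionals `f` on `E` and `g` on `H` such that `(f ⊗ g)(u) ≠ 0`;
i.e. the functionals `f ⊗ g` separate the points of `E ⊗̂ H`. -/
theorem stmt11 {E : Type*} [NormedAddCommGroup E] [NormedSpace ℂ E] [CompleteSpace E]
    {H : Type*} [NormedAddCommGroup H] [InnerProductSpace ℂ H] [CompleteSpace H]
    {T : Type*} [NormedAddCommGroup T] [NormedSpace ℂ T] [CompleteSpace T]
    (tmul : E →L[ℂ] H →L[ℂ] T)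
    (hnorm : ∀ (x : E) (y : H), ‖tmul x y‖ ≤ ‖x‖ * ‖y‖)
    (hdense : closure (Submodule.span ℂ {t : T | ∃ (x : E) (y : H), t = tmul x y} : Set T)
      = Set.univ)
    (huniv : ∀ φ : E →L[ℂ] H →L[ℂ] ℂ, ∃ Φ : T →L[ℂ] ℂ,
      (∀ (x : E) (y : H), Φ (tmul x y) = φ x y) ∧ ‖Φ‖ ≤ ‖φ‖) :
    ∀ u : T, u ≠ 0 → ∃ (f : E →L[ℂ] ℂ) (g : H →L[ℂ] ℂ) (Φ : T →L[ℂ] ℂ),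
      (∀ (x : E) (y : H), Φ (tmul x y) = f x * g y) ∧ Φ u ≠ 0 := by
  intro u hu
  classical
  by_contra hcon
  push_neg at hcon
  -- Step 1: every continuous linear functional kills `u`.
  have key : ∀ Φ₀ : T →L[ℂ] ℂ, Φ₀ u = 0 := by
    intro Φ₀
    have hle : ∀ ε : ℝ, 0 < ε → ‖Φ₀ u‖ ≤ 2 * ‖Φ₀‖ * ε := by
      intro ε hε
      have humem : u ∈ closure (Submodule.span ℂ
          {t : T | ∃ (x : E) (y : H), t = tmul x y} : Set T) := by
        rw [hdense]; trivial
      have hQall : ∀ w ∈ (Submodule.span ℂ {t : T | ∃ (x : E) (y : H), t = tmul x y}),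
          ∃ s : Finset H, w ∈ Submodule.span ℂ
          {w : T | ∃ x : E, ∃ y ∈ Submodule.span ℂ (↑s : Set H), w = tmul x y} := by
        intro w hw
        induction hw using Submodule.span_induction with
        | mem w hw =>
          obtain ⟨x, y, rfl⟩ := hw
          exact ⟨{y}, Submodule.subset_span ⟨x, y, Submodule.subset_span (by simp), rfl⟩⟩
        | zero => exact ⟨∅, Submodule.zero_mem _⟩
        | add a b _ _ iha ihb =>
          obtain ⟨s₁, h₁⟩ := iha
          obtain ⟨s₂, h₂⟩ := ihb
          have hm : ∀ s s' : Finset H, (↑s : Set H) ⊆ ↑s' →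
              {w : T | ∃ x : E, ∃ y ∈ Submodule.span ℂ (↑s : Set H), w = tmul x y} ⊆
              {w : T | ∃ x : E, ∃ y ∈ Submodule.span ℂ (↑s' : Set H), w = tmul x y} := by
            rintro s s' hss w ⟨x, y, hy, rfl⟩
            exact ⟨x, y, Submodule.span_mono hss hy, rfl⟩
          exact ⟨s₁ ∪ s₂, Submodule.add_mem _
            (Submodule.span_mono (hm _ _
              (by rw [Finset.coe_union]; exact Set.subset_union_left)) h₁)
            (Submodule.span_mono (hm _ _
              (by rw [Finset.coe_union]; exact Set.subset_union_right)) h₂)⟩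
        | smul c a _ ih =>
          obtain ⟨s, h⟩ := ih
          exact ⟨s, Submodule.smul_mem _ _ h⟩
      obtain ⟨t, ht, hdist⟩ := Metric.mem_closure_iff.1 humem ε hε
      have hdist' : ‖u - t‖ ≤ ε := le_of_lt (by rwa [← dist_eq_norm])
      obtain ⟨s, hts⟩ := hQall t ht
      set K : Submodule ℂ H := Submodule.span ℂ (↑s : Set H) with hK
      have : FiniteDimensional ℂ K := FiniteDimensional.span_finset ℂ s
      set P : H →L[ℂ] H := K.subtypeL.comp (K.orthogonalProjectionOnto) with hPdef
      have hP1 : ∀ y ∈ K, P y = y := fun y hy => Submodule.starProjection_eq_self_iff.2 hy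
      have hPnorm : ∀ y : H, ‖P y‖ ≤ ‖y‖ := by
        intro y
        have h1 := (K.orthogonalProjectionOnto).le_opNorm y
        have h2 := Submodule.orthogonalProjectionOnto_norm_le K
        calc ‖P y‖ = ‖K.orthogonalProjectionOnto y‖ := rfl
          _ ≤ ‖K.orthogonalProjectionOnto‖ * ‖y‖ := h1
          _ ≤ 1 * ‖y‖ := by gcongr
          _ = ‖y‖ := one_mul _
      -- the bilinear form (x, y) ↦ Φ₀ (tmul x (P y))
      set φP : E →L[ℂ] H →L[ℂ] ℂ :=
        (ContinuousLinearMap.compL ℂ H T ℂ Φ₀).comp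
          (((ContinuousLinearMap.compL ℂ H H T).flip P).comp tmul) with hφPdef
      have hφP : ∀ (x : E) (y : H), φP x y = Φ₀ (tmul x (P y)) := fun x y => rfl
      have hφPnorm : ‖φP‖ ≤ ‖Φ₀‖ := by
        refine ContinuousLinearMap.opNorm_le_bound _ (norm_nonneg _) fun x => ?_
        refine ContinuousLinearMap.opNorm_le_bound _ (by positivity) fun y => ?_
        calc ‖φP x y‖ = ‖Φ₀ (tmul x (P y))‖ := by rw [hφP]
          _ ≤ ‖Φ₀‖ * ‖tmul x (P y)‖ := Φ₀.le_opNorm _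
          _ ≤ ‖Φ₀‖ * (‖x‖ * ‖P y‖) := by gcongr; exact hnorm _ _
          _ ≤ ‖Φ₀‖ * (‖x‖ * ‖y‖) := by gcongr; exact hPnorm y
          _ = ‖Φ₀‖ * ‖x‖ * ‖y‖ := by ring
      obtain ⟨ΦP, hΦP, hΦPle⟩ := huniv φP
      have hΦPnorm : ‖ΦP‖ ≤ ‖Φ₀‖ := hΦPle.trans hφPnorm
      -- ΦP agrees with Φ₀ at t
      have hΦPt' : ∀ w ∈ Submodule.span ℂ
          {w : T | ∃ x : E, ∃ y ∈ K, w = tmul x y}, ΦP w = Φ₀ w := by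
        intro w hw
        induction hw using Submodule.span_induction with
        | mem w hw =>
          obtain ⟨x, y, hy, rfl⟩ := hw
          rw [hΦP, hφP, hP1 y hy]
        | zero => simp
        | add a b _ _ iha ihb => simp [iha, ihb]
        | smul c a _ ih => simp [ih]
      have hΦPt : ΦP t = Φ₀ t := hΦPt' t hts
      -- ΦP u = 0 via the finite-rank decomposition
      have hΦPu : ΦP u = 0 := by
        set b := stdOrthonormalBasis ℂ K with hb
        set n := Module.finrank ℂ K with hn
        set f : Fin n → (E →L[ℂ] ℂ) := fun i => Φ₀.comp (tmul.flip (b i : H)) with hf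
        set g : Fin n → (H →L[ℂ] ℂ) := fun i => innerSL ℂ (b i : H) with hg
        have hΦi : ∀ i : Fin n, ∃ Φi : T →L[ℂ] ℂ,
            ∀ (x : E) (y : H), Φi (tmul x y) = f i x * g i y := by
          intro i
          obtain ⟨Φi, hΦi, -⟩ := huniv ((f i).smulRight (g i))
          exact ⟨Φi, fun x y => by rw [hΦi]; simp⟩
        choose Φi hΦispec using hΦi
        have hΦiu : ∀ i, Φi i u = 0 := fun i => hcon (f i) (g i) (Φi i) (hΦispec i)
        set Ψ : T →L[ℂ] ℂ := ∑ i, Φi i with hΨ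
        have hΨu : Ψ u = 0 := by
          rw [hΨ, ContinuousLinearMap.sum_apply]
          exact Finset.sum_eq_zero fun i _ => hΦiu i
        -- ΦP = Ψ on elementary tensors
        have hgen : ∀ (x : E) (y : H), ΦP (tmul x y) = Ψ (tmul x y) := by
          intro x y
          have hPy : P y = ∑ i, (inner ℂ (b i : H) y : ℂ) • (b i : H) := by
            have := b.orthogonalProjectionOnto_apply_eq_sum y
            calc P y = (K.orthogonalProjectionOnto y : H) := rfl
              _ = ((∑ i, (inner ℂ (b i : H) y : ℂ) • b i : K) : H) := by rw [this]
              _ = ∑ i, (inner ℂ (b i : H) y : ℂ) • (b i : H) := by push_cast; rfl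
          rw [hΦP, hφP, hPy]
          rw [hΨ, ContinuousLinearMap.sum_apply]
          rw [map_sum, map_sum]
          refine Finset.sum_congr rfl fun i _ => ?_
          rw [hΦispec i]
          simp [hf, hg, mul_comm]
        -- extend to all of T by density
        have hall : (ΦP : T → ℂ) = (Ψ : T → ℂ) := by
          have hd : Dense (Submodule.span ℂ
              {t : T | ∃ (x : E) (y : H), t = tmul x y} : Set T) :=
            dense_iff_closure_eq.2 hdense
          refine Continuous.ext_on hd ΦP.continuous Ψ.continuous ?_
          intro w hw
          induction hw using Submodule.span_induction with
          | mem w hw => obtain ⟨x, y, rfl⟩ := hw; exact hgen x y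
          | zero => simp
          | add a c _ _ iha ihc => simp only [map_add, iha, ihc]
          | smul c a _ ih => simp only [map_smul, ih]
        rw [show ΦP u = Ψ u from congrFun hall u, hΨu]
      -- final estimate
      calc ‖Φ₀ u‖ = ‖Φ₀ (u - t) + (ΦP (t - u) + ΦP u)‖ := by
            rw [map_sub, map_sub, hΦPt]; ring_nf
          _ = ‖Φ₀ (u - t) + ΦP (t - u)‖ := by rw [hΦPu, add_zero]
          _ ≤ ‖Φ₀ (u - t)‖ + ‖ΦP (t - u)‖ := norm_add_le _ _
          _ ≤ ‖Φ₀‖ * ‖u - t‖ + ‖ΦP‖ * ‖t - u‖ :=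
            add_le_add (Φ₀.le_opNorm _) (ΦP.le_opNorm _)
          _ ≤ ‖Φ₀‖ * ε + ‖Φ₀‖ * ε := by
            rw [norm_sub_rev t u]
            exact add_le_add (by gcongr) (by gcongr)
          _ = 2 * ‖Φ₀‖ * ε := by ring
    -- conclude Φ₀ u = 0
    by_contra h0
    have ha : 0 < ‖Φ₀ u‖ := norm_pos_iff.2 h0
    set N := ‖Φ₀‖ with hN
    have hNpos : (0:ℝ) ≤ N := norm_nonneg _
    set ε := ‖Φ₀ u‖ / (2 * N + 1) with hε
    have hεpos : 0 < ε := by positivity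
    have h1 := hle ε hεpos
    have h2 : ε * (2 * N + 1) = ‖Φ₀ u‖ := by
      rw [hε]; field_simp
    nlinarith
  obtain ⟨g, hg1, hg2⟩ := exists_dual_vector ℂ u (norm_ne_zero_iff.mpr hu)
  rw [key g] at hg2
  exact hu (norm_eq_zero.1 (Complex.ofReal_eq_zero.1 hg2.symm))
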